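/- arXiv:2005.13834 — 2 statements merged into one kernel-verified Lean document; each statement's English description precedes it below -/
import Mathlib

section
/- Let P be a noncommutative polynomial in d variables and their adjoints, let z = (z₁,…,z_d) be elements of a C*-algebra 𝒜, and let δ_i be the noncommutative derivative satisfying Leibniz's rule with δ_i Y_j = 1_{i=j} Y_i ⊗ 1 and δ_i Y_j* = −1_{i=j} 1 ⊗ Y_i*. Then (δ_i e^P)(z,z*) = ∫₀¹ (e^{αP} · δ_iP · e^{(1−α)P})(z,z*) dα, where the product uses the convention A·(B⊗C)·D = (AB)⊗(CD), and δ_i e^P is defined by the convergent series ∑_{k≥0} (1/k!) δ_i(P^k). -/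
open scoped TensorProduct

set_option linter.unusedSectionVars false
set_option maxHeartbeats 2000000

section

variable {d : ℕ} {𝒜 T : Type*}
  [NormedRing 𝒜] [StarRing 𝒜] [CStarRing 𝒜] [NormedAlgebra ℂ 𝒜] [StarModule ℂ 𝒜]
  [CompleteSpace 𝒜]
  [NormedRing T] [StarRing T] [CStarRing T] [NormedAlgebra ℂ T] [StarModule ℂ T]
  [CompleteSpace T]

/-- The free algebra `ℂ⟨Y₁,…,Y_d,Y₁*,…,Y_d*⟩`, with `Sum.inl j ↦ Y_j` and
`Sum.inr j ↦ Y_j*`. -/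
abbrev NCPoly (d : ℕ) := FreeAlgebra ℂ (Fin d ⊕ Fin d)

/-- Evaluation `P ↦ P(z, z*)` at a tuple `z` of elements of a C*-algebra. -/
noncomputable def evMap (z : Fin d → 𝒜) : NCPoly d →ₐ[ℂ] 𝒜 :=
  FreeAlgebra.lift ℂ (Sum.elim z fun j => star (z j))

/-- Evaluation `A ⊗ B ↦ A(z,z*) ⊗ B(z,z*) ∈ 𝒜 ⊗_min 𝒜` of tensors of polynomials, the
minimal tensor product `𝒜 ⊗_min 𝒜` being realized as a C*-algebra `T` together with a bilinear
map `m : 𝒜 × 𝒜 → T` playing the role of `a ⊗ b`. -/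
noncomputable def Ev2 (z : Fin d → 𝒜) (m : 𝒜 →ₗ[ℂ] 𝒜 →ₗ[ℂ] T) :
    (NCPoly d ⊗[ℂ] NCPoly d) →ₗ[ℂ] T :=
  TensorProduct.lift ((m ∘ₗ (evMap z).toLinearMap).compl₂ (evMap z).toLinearMap)

/-- Evaluation of a tensor of polynomials sandwiched between `E₁` (on the left of the first
leg) and `E₂` (on the right of the second leg), realizing
`U ⊗ V ↦ (E₁ · U(z,z*)) ⊗ (V(z,z*) · E₂)`, i.e. the convention `A·(B⊗C)·D = (AB)⊗(CD)`. -/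
noncomputable def sandwich (z : Fin d → 𝒜) (m : 𝒜 →ₗ[ℂ] 𝒜 →ₗ[ℂ] T) (E₁ E₂ : 𝒜) :
    (NCPoly d ⊗[ℂ] NCPoly d) →ₗ[ℂ] T :=
  TensorProduct.lift
    ((m ∘ₗ (LinearMap.mulLeft ℂ E₁ ∘ₗ (evMap z).toLinearMap)).compl₂
      (LinearMap.mulRight ℂ E₂ ∘ₗ (evMap z).toLinearMap))

/-! ### Auxiliary lemmas -/

lemma sandwich_tmul (z : Fin d → 𝒜) (m : 𝒜 →ₗ[ℂ] 𝒜 →ₗ[ℂ] T) (E₁ E₂ : 𝒜)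
    (a b : NCPoly d) :
    sandwich z m E₁ E₂ (a ⊗ₜ[ℂ] b) = m (E₁ * evMap z a) (evMap z b * E₂) := rfl

lemma Ev2_tmul (z : Fin d → 𝒜) (m : 𝒜 →ₗ[ℂ] 𝒜 →ₗ[ℂ] T) (a b : NCPoly d) :
    Ev2 z m (a ⊗ₜ[ℂ] b) = m (evMap z a) (evMap z b) := rfl

lemma Ev2_eq_sandwich (z : Fin d → 𝒜) (m : 𝒜 →ₗ[ℂ] 𝒜 →ₗ[ℂ] T)
    (u : NCPoly d ⊗[ℂ] NCPoly d) : Ev2 z m u = sandwich z m 1 1 u := by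
  induction u using TensorProduct.induction_on with
  | zero => simp
  | tmul a b => simp [Ev2_tmul, sandwich_tmul]
  | add x y hx hy => simp [map_add, hx, hy]

lemma sandwich_mul_right (z : Fin d → 𝒜) (m : 𝒜 →ₗ[ℂ] 𝒜 →ₗ[ℂ] T) (E₁ E₂ : 𝒜)
    (Q : NCPoly d) (u : NCPoly d ⊗[ℂ] NCPoly d) :
    sandwich z m E₁ E₂ (u * ((1 : NCPoly d) ⊗ₜ[ℂ] Q))
      = sandwich z m E₁ (evMap z Q * E₂) u := by
  induction u using TensorProduct.induction_on with
  | zero => simp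
  | tmul a b =>
    rw [Algebra.TensorProduct.tmul_mul_tmul, sandwich_tmul, sandwich_tmul]
    simp [map_mul, mul_assoc]
  | add x y hx hy => rw [add_mul, map_add, hx, hy, map_add]

lemma sandwich_mul_left (z : Fin d → 𝒜) (m : 𝒜 →ₗ[ℂ] 𝒜 →ₗ[ℂ] T) (E₁ E₂ : 𝒜)
    (Q : NCPoly d) (u : NCPoly d ⊗[ℂ] NCPoly d) :
    sandwich z m E₁ E₂ ((Q ⊗ₜ[ℂ] (1 : NCPoly d)) * u)
      = sandwich z m (E₁ * evMap z Q) E₂ u := by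
  induction u using TensorProduct.induction_on with
  | zero => simp
  | tmul a b =>
    rw [Algebra.TensorProduct.tmul_mul_tmul, sandwich_tmul, sandwich_tmul]
    simp [map_mul, mul_assoc]
  | add x y hx hy => rw [mul_add, map_add, hx, hy, map_add]

lemma sandwich_add_left (z : Fin d → 𝒜) (m : 𝒜 →ₗ[ℂ] 𝒜 →ₗ[ℂ] T) (E₁ E₁' E₂ : 𝒜)
    (u : NCPoly d ⊗[ℂ] NCPoly d) :
    sandwich z m (E₁ + E₁') E₂ u = sandwich z m E₁ E₂ u + sandwich z m E₁' E₂ u := by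
  induction u using TensorProduct.induction_on with
  | zero => simp
  | tmul a b => simp [sandwich_tmul, add_mul]
  | add x y hx hy => simp only [map_add, hx, hy]; abel

lemma sandwich_smul_left (z : Fin d → 𝒜) (m : 𝒜 →ₗ[ℂ] 𝒜 →ₗ[ℂ] T) (c : ℂ) (E₁ E₂ : 𝒜)
    (u : NCPoly d ⊗[ℂ] NCPoly d) :
    sandwich z m (c • E₁) E₂ u = c • sandwich z m E₁ E₂ u := by
  induction u using TensorProduct.induction_on with
  | zero => simp
  | tmul a b => simp [sandwich_tmul, smul_mul_assoc]
  | add x y hx hy => simp only [map_add, hx, hy, smul_add]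

lemma sandwich_add_right (z : Fin d → 𝒜) (m : 𝒜 →ₗ[ℂ] 𝒜 →ₗ[ℂ] T) (E₁ E₂ E₂' : 𝒜)
    (u : NCPoly d ⊗[ℂ] NCPoly d) :
    sandwich z m E₁ (E₂ + E₂') u = sandwich z m E₁ E₂ u + sandwich z m E₁ E₂' u := by
  induction u using TensorProduct.induction_on with
  | zero => simp
  | tmul a b => simp [sandwich_tmul, mul_add]
  | add x y hx hy => simp only [map_add, hx, hy]; abel

lemma sandwich_smul_right (z : Fin d → 𝒜) (m : 𝒜 →ₗ[ℂ] 𝒜 →ₗ[ℂ] T) (c : ℂ) (E₁ E₂ : 𝒜)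
    (u : NCPoly d ⊗[ℂ] NCPoly d) :
    sandwich z m E₁ (c • E₂) u = c • sandwich z m E₁ E₂ u := by
  induction u using TensorProduct.induction_on with
  | zero => simp
  | tmul a b => simp [sandwich_tmul, mul_smul_comm]
  | add x y hx hy => simp only [map_add, hx, hy, smul_add]

lemma sandwich_bound (z : Fin d → 𝒜) (m : 𝒜 →ₗ[ℂ] 𝒜 →ₗ[ℂ] T)
    (hm_norm : ∀ a b : 𝒜, ‖m a b‖ ≤ ‖a‖ * ‖b‖) (u : NCPoly d ⊗[ℂ] NCPoly d) :
    ∃ C : ℝ, 0 ≤ C ∧ ∀ E₁ E₂ : 𝒜, ‖sandwich z m E₁ E₂ u‖ ≤ C * ‖E₁‖ * ‖E₂‖ := by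
  induction u using TensorProduct.induction_on with
  | zero => exact ⟨0, le_refl _, by simp⟩
  | tmul a b =>
    refine ⟨‖evMap z a‖ * ‖evMap z b‖, by positivity, fun E₁ E₂ => ?_⟩
    rw [sandwich_tmul]
    calc ‖m (E₁ * evMap z a) (evMap z b * E₂)‖
        ≤ ‖E₁ * evMap z a‖ * ‖evMap z b * E₂‖ := hm_norm _ _
      _ ≤ (‖E₁‖ * ‖evMap z a‖) * (‖evMap z b‖ * ‖E₂‖) := by
          gcongr <;> exact norm_mul_le _ _
      _ = ‖evMap z a‖ * ‖evMap z b‖ * ‖E₁‖ * ‖E₂‖ := by ring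
  | add x y hx hy =>
    obtain ⟨C₁, hC₁0, hC₁⟩ := hx
    obtain ⟨C₂, hC₂0, hC₂⟩ := hy
    refine ⟨C₁ + C₂, by positivity, fun E₁ E₂ => ?_⟩
    rw [map_add]
    calc ‖sandwich z m E₁ E₂ x + sandwich z m E₁ E₂ y‖
        ≤ ‖sandwich z m E₁ E₂ x‖ + ‖sandwich z m E₁ E₂ y‖ := norm_add_le _ _
      _ ≤ C₁ * ‖E₁‖ * ‖E₂‖ + C₂ * ‖E₁‖ * ‖E₂‖ := add_le_add (hC₁ _ _) (hC₂ _ _)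
      _ = (C₁ + C₂) * ‖E₁‖ * ‖E₂‖ := by ring

lemma D_one (D : Fin d → (NCPoly d →ₗ[ℂ] NCPoly d ⊗[ℂ] NCPoly d))
    (hLeib : ∀ (i : Fin d) (P Q : NCPoly d),
      D i (P * Q) = D i P * ((1 : NCPoly d) ⊗ₜ[ℂ] Q) + (P ⊗ₜ[ℂ] (1 : NCPoly d)) * D i Q)
    (i : Fin d) : D i (1 : NCPoly d) = 0 := by
  have h := hLeib i 1 1
  have h1 : ((1 : NCPoly d) ⊗ₜ[ℂ] (1 : NCPoly d)) = (1 : NCPoly d ⊗[ℂ] NCPoly d) := rfl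
  rw [mul_one, h1, mul_one, one_mul] at h
  have := congrArg (fun x => x - D i 1) h
  simpa using this.symm

lemma key_sum (z : Fin d → 𝒜) (m : 𝒜 →ₗ[ℂ] 𝒜 →ₗ[ℂ] T)
    (D : Fin d → (NCPoly d →ₗ[ℂ] NCPoly d ⊗[ℂ] NCPoly d))
    (hLeib : ∀ (i : Fin d) (P Q : NCPoly d),
      D i (P * Q) = D i P * ((1 : NCPoly d) ⊗ₜ[ℂ] Q) + (P ⊗ₜ[ℂ] (1 : NCPoly d)) * D i Q)
    (P : NCPoly d) (i : Fin d) :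
    ∀ (k : ℕ) (E₁ E₂ : 𝒜),
      sandwich z m E₁ E₂ (D i (P ^ k))
        = ∑ j ∈ Finset.range k,
            sandwich z m (E₁ * (evMap z P) ^ j) ((evMap z P) ^ (k - 1 - j) * E₂) (D i P) := by
  intro k
  induction k with
  | zero => intro E₁ E₂; simp [D_one D hLeib i]
  | succ k ih =>
    intro E₁ E₂
    rw [pow_succ, hLeib i (P ^ k) P, map_add, sandwich_mul_right, sandwich_mul_left,
      ih E₁ (evMap z P * E₂), Finset.sum_range_succ]
    congr 1
    · refine Finset.sum_congr rfl fun j hj => ?_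
      rw [Finset.mem_range] at hj
      have h1 : k + 1 - 1 - j = (k - 1 - j) + 1 := by omega
      rw [h1, pow_succ, mul_assoc]
    · have h2 : k + 1 - 1 - k = 0 := by omega
      rw [h2, pow_zero, one_mul, map_pow]

lemma beta_val (p q : ℕ) :
    ∫ α in (0:ℝ)..1, (α : ℂ) ^ p * (1 - (α : ℂ)) ^ q
      = ((p.factorial : ℂ) * q.factorial) / ((p + q + 1).factorial) := by
  have hs : 0 < ((p : ℂ) + 1).re := by
    simp only [Complex.add_re, Complex.natCast_re, Complex.one_re]
    positivity
  have ht : 0 < ((q : ℂ) + 1).re := by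
    simp only [Complex.add_re, Complex.natCast_re, Complex.one_re]
    positivity
  have h := Complex.Gamma_mul_Gamma_eq_betaIntegral hs ht
  have hβ : Complex.betaIntegral ((p : ℂ) + 1) ((q : ℂ) + 1)
      = ∫ α in (0:ℝ)..1, (α : ℂ) ^ p * (1 - (α : ℂ)) ^ q := by
    unfold Complex.betaIntegral
    refine intervalIntegral.integral_congr fun x _ => ?_
    rw [add_sub_cancel_right, add_sub_cancel_right, Complex.cpow_natCast, Complex.cpow_natCast]
  have hΓp : Complex.Gamma ((p : ℂ) + 1) = p.factorial := Complex.Gamma_nat_eq_factorial p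
  have hΓq : Complex.Gamma ((q : ℂ) + 1) = q.factorial := Complex.Gamma_nat_eq_factorial q
  have hΓpq : Complex.Gamma ((p : ℂ) + 1 + ((q : ℂ) + 1)) = (p + q + 1).factorial := by
    have h' : ((p : ℂ) + 1 + ((q : ℂ) + 1)) = (((p + q + 1 : ℕ) : ℂ) + 1) := by push_cast; ring
    rw [h', Complex.Gamma_nat_eq_factorial]
  rw [hΓp, hΓq, hΓpq, hβ] at h
  have hne : ((p + q + 1).factorial : ℂ) ≠ 0 :=
    Nat.cast_ne_zero.mpr (Nat.factorial_ne_zero _)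
  field_simp at h ⊢
  linear_combination -h

/-- The coefficient `α^p/p!` of the exponential series. -/
noncomputable def dCoeff (α : ℝ) (p : ℕ) : ℂ := ((p.factorial : ℂ))⁻¹ * (α : ℂ) ^ p

lemma dCoeff_norm (α : ℝ) (p : ℕ) : ‖dCoeff α p‖ = |α| ^ p / p.factorial := by
  simp [dCoeff, norm_mul, norm_pow, Complex.norm_real]
  ring

lemma dCoeff_continuous (p : ℕ) : Continuous fun α : ℝ => dCoeff α p := by
  unfold dCoeff
  exact continuous_const.mul (Complex.continuous_ofReal.pow p)

lemma dCoeff_hasSum (α : ℝ) (x : 𝒜) :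
    HasSum (fun p => dCoeff α p • x ^ p) (NormedSpace.exp ((α : ℂ) • x)) := by
  have h := NormedSpace.exp_series_hasSum_exp' (𝕂 := ℂ) ((α : ℂ) • x)
  have he : (fun p => dCoeff α p • x ^ p)
      = fun n => ((n.factorial : ℂ))⁻¹ • ((α : ℂ) • x) ^ n := by
    funext n; rw [smul_pow, smul_smul, dCoeff]
  rw [he]; exact h

lemma bilin_exp_expand (B : 𝒜 →L[ℂ] 𝒜 →L[ℂ] T) (x : 𝒜) (K r : ℝ)
    (hB : ∀ p q : ℕ, ‖B (x ^ p) (x ^ q)‖ ≤ K * r ^ p * r ^ q) (hK : 0 ≤ K)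
    (hr : 0 ≤ r) (α β : ℝ) :
    HasSum (fun pq : ℕ × ℕ => (dCoeff α pq.1 * dCoeff β pq.2) • B (x ^ pq.1) (x ^ pq.2))
      (B (NormedSpace.exp ((α : ℂ) • x)) (NormedSpace.exp ((β : ℂ) • x))) := by
  have h1 := dCoeff_hasSum α x
  have h2 := dCoeff_hasSum β x
  have hq : ∀ p : ℕ, HasSum (fun q => (dCoeff α p * dCoeff β q) • B (x ^ p) (x ^ q))
      (dCoeff α p • B (x ^ p) (NormedSpace.exp ((β : ℂ) • x))) := by
    intro p
    have h3 := (B (x ^ p)).hasSum h2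
    have h4 := h3.const_smul (dCoeff α p)
    simpa [map_smul, smul_smul] using h4
  have hp : HasSum (fun p => dCoeff α p • B (x ^ p) (NormedSpace.exp ((β : ℂ) • x)))
      (B (NormedSpace.exp ((α : ℂ) • x)) (NormedSpace.exp ((β : ℂ) • x))) := by
    have h5 := (B.flip (NormedSpace.exp ((β : ℂ) • x))).hasSum h1
    simpa [map_smul] using h5
  have hsum : Summable
      (fun pq : ℕ × ℕ => (dCoeff α pq.1 * dCoeff β pq.2) • B (x ^ pq.1) (x ^ pq.2)) := by
    apply Summable.of_norm
    have hb : ∀ pq : ℕ × ℕ,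
        ‖(dCoeff α pq.1 * dCoeff β pq.2) • B (x ^ pq.1) (x ^ pq.2)‖
          ≤ (K * ((|α| * r) ^ pq.1 / pq.1.factorial)) * ((|β| * r) ^ pq.2 / pq.2.factorial) := by
      rintro ⟨p, q⟩
      rw [norm_smul, norm_mul, dCoeff_norm, dCoeff_norm]
      calc |α| ^ p / p.factorial * (|β| ^ q / q.factorial) * ‖B (x ^ p) (x ^ q)‖
          ≤ |α| ^ p / p.factorial * (|β| ^ q / q.factorial) * (K * r ^ p * r ^ q) := by
            exact mul_le_mul_of_nonneg_left (hB p q) (by positivity)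
        _ = (K * ((|α| * r) ^ p / p.factorial)) * ((|β| * r) ^ q / q.factorial) := by
            rw [mul_pow, mul_pow]; ring
    refine Summable.of_nonneg_of_le (fun _ => norm_nonneg _) hb ?_
    exact ((Real.summable_pow_div_factorial (|α| * r)).mul_left K).mul_of_nonneg
      (Real.summable_pow_div_factorial (|β| * r))
      (fun p => by positivity) (fun q => by positivity)
  have htot := hsum.hasSum
  have hfib := htot.prod_fiberwise hq
  rw [hp.unique hfib]
  exact htot

/-- Duhamel formula for the noncommutative derivative of the exponential:
`(δ_i e^P)(z,z*) = ∫₀¹ (e^{αP} δ_iP e^{(1−α)P})(z,z*) dα`, where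
`(δ_i e^P)(z,z*) = ∑_k (1/k!)(δ_i P^k)(z,z*)`. -/
theorem stmt_3 (z : Fin d → 𝒜) (m : 𝒜 →ₗ[ℂ] 𝒜 →ₗ[ℂ] T)
    (hm_mul : ∀ a b c e : 𝒜, m a b * m c e = m (a * c) (b * e))
    (hm_one : m 1 1 = 1)
    (hm_norm : ∀ a b : 𝒜, ‖m a b‖ ≤ ‖a‖ * ‖b‖)
    (D : Fin d → (NCPoly d →ₗ[ℂ] NCPoly d ⊗[ℂ] NCPoly d))
    (hLeib : ∀ (i : Fin d) (P Q : NCPoly d),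
      D i (P * Q) = D i P * ((1 : NCPoly d) ⊗ₜ[ℂ] Q) + (P ⊗ₜ[ℂ] (1 : NCPoly d)) * D i Q)
    (hGen1 : ∀ i j : Fin d, D i (FreeAlgebra.ι ℂ (Sum.inl j))
      = if i = j then FreeAlgebra.ι ℂ (Sum.inl i : Fin d ⊕ Fin d) ⊗ₜ[ℂ] (1 : NCPoly d) else 0)
    (hGen2 : ∀ i j : Fin d, D i (FreeAlgebra.ι ℂ (Sum.inr j))
      = if i = j then -((1 : NCPoly d) ⊗ₜ[ℂ] FreeAlgebra.ι ℂ (Sum.inr i : Fin d ⊕ Fin d))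
        else 0)
    (P : NCPoly d) (i : Fin d) :
    (∑' k : ℕ, ((k.factorial : ℂ))⁻¹ • Ev2 z m (D i (P ^ k)))
      = ∫ α in (0:ℝ)..1,
          sandwich z m (NormedSpace.exp ((α : ℂ) • evMap z P))
            (NormedSpace.exp ((1 - (α : ℂ)) • evMap z P)) (D i P) := by
  classical
  obtain ⟨C, hC0, hC⟩ := sandwich_bound z m hm_norm (D i P)
  set A : 𝒜 := evMap z P with hA
  let Sl : 𝒜 →ₗ[ℂ] 𝒜 →ₗ[ℂ] T :=
    LinearMap.mk₂ ℂ (fun E₁ E₂ => sandwich z m E₁ E₂ (D i P))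
      (fun a a' b => sandwich_add_left z m a a' b (D i P))
      (fun c a b => sandwich_smul_left z m c a b (D i P))
      (fun a b b' => sandwich_add_right z m a b b' (D i P))
      (fun c a b => sandwich_smul_right z m c a b (D i P))
  let Sc : 𝒜 →L[ℂ] 𝒜 →L[ℂ] T := LinearMap.mkContinuous₂ Sl C (fun x y => hC x y)
  have hSc : ∀ E₁ E₂ : 𝒜, Sc E₁ E₂ = sandwich z m E₁ E₂ (D i P) := fun E₁ E₂ => by
    simp only [Sc, Sl, LinearMap.mkContinuous₂_apply, LinearMap.mk₂_apply]; rfl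
  -- norm bounds for powers of `A`
  set M : ℝ := max ‖(1 : 𝒜)‖ 1 with hM
  set r : ℝ := max ‖A‖ 1 with hr
  have hr0 : 0 ≤ r := le_trans zero_le_one (le_max_right _ _)
  have hM0 : 0 ≤ M := le_trans zero_le_one (le_max_right _ _)
  have hpow : ∀ n : ℕ, ‖A ^ n‖ ≤ M * r ^ n := by
    intro n; induction n with
    | zero =>
      rw [pow_zero, pow_zero, mul_one, hM]
      exact le_max_left _ _
    | succ n ihn =>
      calc ‖A ^ (n + 1)‖ = ‖A ^ n * A‖ := by rw [pow_succ]
        _ ≤ ‖A ^ n‖ * ‖A‖ := norm_mul_le _ _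
        _ ≤ (M * r ^ n) * r :=
            mul_le_mul ihn (le_max_left _ _) (norm_nonneg _) (by positivity)
        _ = M * r ^ (n + 1) := by ring
  set K : ℝ := C * M * M with hK
  have hK0 : 0 ≤ K := by positivity
  have hSb : ∀ p q : ℕ, ‖Sc (A ^ p) (A ^ q)‖ ≤ K * r ^ p * r ^ q := by
    intro p q
    calc ‖Sc (A ^ p) (A ^ q)‖ ≤ C * ‖A ^ p‖ * ‖A ^ q‖ := hC _ _
      _ ≤ C * (M * r ^ p) * (M * r ^ q) :=
          mul_le_mul (mul_le_mul_of_nonneg_left (hpow p) hC0) (hpow q) (norm_nonneg _)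
            (by positivity)
      _ = K * r ^ p * r ^ q := by rw [hK]; ring
  -- pointwise expansion of the integrand
  have hExpand : ∀ α : ℝ,
      sandwich z m (NormedSpace.exp ((α : ℂ) • A))
          (NormedSpace.exp ((1 - (α : ℂ)) • A)) (D i P)
        = ∑' pq : ℕ × ℕ, (dCoeff α pq.1 * dCoeff (1 - α) pq.2) • Sc (A ^ pq.1) (A ^ pq.2) := by
    intro α
    have h := bilin_exp_expand Sc A K r hSb hK0 hr0 α (1 - α)
    have hcast : (((1 - α : ℝ)) : ℂ) = 1 - (α : ℂ) := by push_cast; ring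
    rw [hcast] at h
    rw [← hSc]
    exact h.tsum_eq.symm
  -- the measure
  set μ : MeasureTheory.Measure ℝ := MeasureTheory.volume.restrict (Set.Ioc (0:ℝ) 1) with hμ
  haveI hfin : MeasureTheory.IsFiniteMeasure μ := by
    constructor
    rw [hμ, MeasureTheory.Measure.restrict_apply_univ]
    exact measure_Ioc_lt_top
  have hμuniv : (μ Set.univ).toReal = 1 := by
    rw [hμ, MeasureTheory.Measure.restrict_apply_univ, Real.volume_Ioc]
    simp
  -- summable bound
  obtain ⟨Bnd, hBnd⟩ : ∃ Bnd : ℕ × ℕ → ℝ,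
      Bnd = fun pq => (K * (r ^ pq.1 / pq.1.factorial)) * (r ^ pq.2 / pq.2.factorial) :=
    ⟨_, rfl⟩
  have hBndSummable : Summable Bnd := by
    rw [hBnd]
    exact ((Real.summable_pow_div_factorial r).mul_left K).mul_of_nonneg
      (Real.summable_pow_div_factorial r) (fun p => by positivity) (fun q => by positivity)
  have hbnd : ∀ pq : ℕ × ℕ, ∀ α ∈ Set.Ioc (0:ℝ) 1,
      ‖(dCoeff α pq.1 * dCoeff (1 - α) pq.2) • Sc (A ^ pq.1) (A ^ pq.2)‖ ≤ Bnd pq := by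
    rintro ⟨p, q⟩ α hα
    rw [norm_smul, norm_mul, dCoeff_norm, dCoeff_norm]
    have hα1 : |α| ≤ 1 := abs_le.mpr ⟨by linarith [hα.1], hα.2⟩
    have hα2 : |1 - α| ≤ 1 := abs_le.mpr ⟨by linarith [hα.2], by linarith [hα.1]⟩
    calc |α| ^ p / p.factorial * (|1 - α| ^ q / q.factorial) * ‖Sc (A ^ p) (A ^ q)‖
        ≤ 1 ^ p / p.factorial * (1 ^ q / q.factorial) * (K * r ^ p * r ^ q) := by
          gcongr
          exact hSb p q
      _ = Bnd (p, q) := by simp only [hBnd, one_pow]; ring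
  -- integrability
  have hcont : ∀ pq : ℕ × ℕ, Continuous fun α : ℝ =>
      (dCoeff α pq.1 * dCoeff (1 - α) pq.2) • Sc (A ^ pq.1) (A ^ pq.2) := by
    rintro ⟨p, q⟩
    exact ((dCoeff_continuous p).mul
      ((dCoeff_continuous q).comp (continuous_const.sub continuous_id))).smul continuous_const
  have hInt : ∀ pq : ℕ × ℕ, MeasureTheory.Integrable
      (fun α => (dCoeff α pq.1 * dCoeff (1 - α) pq.2) • Sc (A ^ pq.1) (A ^ pq.2)) μ := by
    intro pq
    rw [hμ]
    exact (intervalIntegrable_iff_integrableOn_Ioc_of_le zero_le_one).mp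
      ((hcont pq).intervalIntegrable 0 1)
  have hIntNorm : ∀ pq : ℕ × ℕ,
      (∫ α, ‖(dCoeff α pq.1 * dCoeff (1 - α) pq.2) • Sc (A ^ pq.1) (A ^ pq.2)‖ ∂μ)
        ≤ Bnd pq := by
    intro pq
    have h1 : ∀ᵐ α ∂μ,
        ‖‖(dCoeff α pq.1 * dCoeff (1 - α) pq.2) • Sc (A ^ pq.1) (A ^ pq.2)‖‖ ≤ Bnd pq := by
      rw [hμ]
      filter_upwards [MeasureTheory.ae_restrict_mem measurableSet_Ioc] with α hα
      rw [norm_norm]; exact hbnd pq α hα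
    calc (∫ α, ‖(dCoeff α pq.1 * dCoeff (1 - α) pq.2) • Sc (A ^ pq.1) (A ^ pq.2)‖ ∂μ)
        ≤ ‖∫ α, ‖(dCoeff α pq.1 * dCoeff (1 - α) pq.2) • Sc (A ^ pq.1) (A ^ pq.2)‖ ∂μ‖ := by
          rw [Real.norm_eq_abs]; exact le_abs_self _
      _ ≤ Bnd pq * (μ Set.univ).toReal :=
          MeasureTheory.norm_integral_le_of_norm_le_const h1
      _ = Bnd pq := by rw [hμuniv, mul_one]
  have hSumInt : Summable (fun pq : ℕ × ℕ =>
      ∫ α, ‖(dCoeff α pq.1 * dCoeff (1 - α) pq.2) • Sc (A ^ pq.1) (A ^ pq.2)‖ ∂μ) :=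
    Summable.of_nonneg_of_le
      (fun pq => MeasureTheory.integral_nonneg (fun α => norm_nonneg _)) hIntNorm hBndSummable
  have hswap := MeasureTheory.integral_tsum_of_summable_integral_norm hInt hSumInt
  -- value of each integral
  have hval : ∀ pq : ℕ × ℕ,
      (∫ α, (dCoeff α pq.1 * dCoeff (1 - α) pq.2) • Sc (A ^ pq.1) (A ^ pq.2) ∂μ)
        = (((pq.1 + pq.2 + 1).factorial : ℂ))⁻¹ • Sc (A ^ pq.1) (A ^ pq.2) := by
    rintro ⟨p, q⟩
    rw [integral_smul_const]
    congr 1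
    have h2 : (fun α : ℝ => dCoeff α p * dCoeff (1 - α) q)
        = fun α : ℝ => ((p.factorial : ℂ))⁻¹ * ((q.factorial : ℂ))⁻¹
            * ((α : ℂ) ^ p * (1 - (α : ℂ)) ^ q) := by
      funext α
      have hcast : (((1 - α : ℝ)) : ℂ) = 1 - (α : ℂ) := by push_cast; ring
      rw [dCoeff, dCoeff, hcast]; ring
    rw [h2, MeasureTheory.integral_const_mul]
    have h3 : (∫ α, (α : ℂ) ^ p * (1 - (α : ℂ)) ^ q ∂μ)
        = ((p.factorial : ℂ) * q.factorial) / ((p + q + 1).factorial) := by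
      rw [hμ, ← intervalIntegral.integral_of_le (zero_le_one)]
      exact beta_val p q
    rw [h3]
    have hp0 : (p.factorial : ℂ) ≠ 0 := Nat.cast_ne_zero.mpr (Nat.factorial_ne_zero _)
    have hq0 : (q.factorial : ℂ) ≠ 0 := Nat.cast_ne_zero.mpr (Nat.factorial_ne_zero _)
    have hpq0 : ((p + q + 1).factorial : ℂ) ≠ 0 := Nat.cast_ne_zero.mpr (Nat.factorial_ne_zero _)
    field_simp
  -- the right-hand side
  have hRHS : (∫ α in (0:ℝ)..1,
        sandwich z m (NormedSpace.exp ((α : ℂ) • A))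
          (NormedSpace.exp ((1 - (α : ℂ)) • A)) (D i P))
      = ∑' pq : ℕ × ℕ, (((pq.1 + pq.2 + 1).factorial : ℂ))⁻¹ • Sc (A ^ pq.1) (A ^ pq.2) := by
    rw [intervalIntegral.integral_of_le zero_le_one, ← hμ]
    have hfe : (fun α : ℝ => sandwich z m (NormedSpace.exp ((α : ℂ) • A))
          (NormedSpace.exp ((1 - (α : ℂ)) • A)) (D i P))
        = fun α : ℝ =>
            ∑' pq : ℕ × ℕ, (dCoeff α pq.1 * dCoeff (1 - α) pq.2) • Sc (A ^ pq.1) (A ^ pq.2) :=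
      funext hExpand
    rw [hfe, ← hswap]
    exact tsum_congr hval
  -- the left-hand side, termwise
  have hLHS : ∀ k : ℕ, ((k.factorial : ℂ))⁻¹ • Ev2 z m (D i (P ^ k))
      = ((k.factorial : ℂ))⁻¹ • ∑ j ∈ Finset.range k, Sc (A ^ j) (A ^ (k - 1 - j)) := by
    intro k
    rw [Ev2_eq_sandwich, key_sum z m D hLeib P i k 1 1]
    congr 1
    refine Finset.sum_congr rfl fun j hj => ?_
    rw [one_mul, mul_one]
    exact (hSc _ _).symm
  -- rearranging the double sum
  obtain ⟨g, hg⟩ : ∃ g : ℕ × ℕ → T,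
      g = fun pq => (((pq.1 + pq.2 + 1).factorial : ℂ))⁻¹ • Sc (A ^ pq.1) (A ^ pq.2) :=
    ⟨_, rfl⟩
  have hgs : Summable g := by
    apply Summable.of_norm
    refine Summable.of_nonneg_of_le (fun _ => norm_nonneg _) ?_ hBndSummable
    rintro ⟨p, q⟩
    have hfle : (p.factorial * q.factorial : ℝ) ≤ ((p + q + 1).factorial : ℝ) := by
      have hd : p.factorial * q.factorial ∣ (p + q + 1).factorial :=
        (Nat.factorial_mul_factorial_dvd_factorial_add p q).trans
          (Nat.factorial_dvd_factorial (Nat.le_succ _))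
      exact_mod_cast Nat.le_of_dvd (Nat.factorial_pos _) hd
    have h1 : ‖(((p + q + 1).factorial : ℂ))⁻¹‖ = (((p + q + 1).factorial : ℝ))⁻¹ := by
      rw [norm_inv, RCLike.norm_natCast]
    calc ‖g (p, q)‖ = (((p + q + 1).factorial : ℝ))⁻¹ * ‖Sc (A ^ p) (A ^ q)‖ := by
          rw [hg, norm_smul, h1]
      _ ≤ ((p.factorial * q.factorial : ℝ))⁻¹ * (K * r ^ p * r ^ q) :=
          mul_le_mul (inv_anti₀ (by positivity) hfle) (hSb p q) (norm_nonneg _)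
            (by positivity)
      _ = Bnd (p, q) := by simp only [hBnd]; field_simp
  have hsig : Summable (fun x : (Σ n : ℕ, (Finset.HasAntidiagonal.antidiagonal n : Finset (ℕ × ℕ))) =>
      g (Finset.HasAntidiagonal.sigmaAntidiagonalEquivProd x)) :=
    (Equiv.summable_iff _).mpr hgs
  have hfib : ∀ n : ℕ, (∑' c : (Finset.HasAntidiagonal.antidiagonal n : Finset (ℕ × ℕ)), g (c : ℕ × ℕ))
      = (((n + 1).factorial : ℂ))⁻¹ • ∑ j ∈ Finset.range (n + 1), Sc (A ^ j) (A ^ (n - j)) := by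
    intro n
    rw [Finset.tsum_subtype]
    rw [Finset.Nat.sum_antidiagonal_eq_sum_range_succ_mk]
    rw [Finset.smul_sum]
    refine Finset.sum_congr rfl fun j hj => ?_
    rw [Finset.mem_range] at hj
    have hsum : j + (n - j) + 1 = n + 1 := by omega
    simp only [hg]
    rw [hsum]
  have hgsum_eq : (∑' pq : ℕ × ℕ, g pq)
      = ∑' n : ℕ, (((n + 1).factorial : ℂ))⁻¹
          • ∑ j ∈ Finset.range (n + 1), Sc (A ^ j) (A ^ (n - j)) := by
    rw [← Finset.HasAntidiagonal.sigmaAntidiagonalEquivProd.tsum_eq g]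
    rw [Summable.tsum_sigma' (fun n => (hasSum_fintype _).summable) hsig]
    refine tsum_congr fun n => ?_
    simp only [Finset.HasAntidiagonal.sigmaAntidiagonalEquivProd_apply]
    exact hfib n
  obtain ⟨L, hL⟩ : ∃ L : ℕ → T,
      L = fun k => ((k.factorial : ℂ))⁻¹ • ∑ j ∈ Finset.range k, Sc (A ^ j) (A ^ (k - 1 - j)) :=
    ⟨_, rfl⟩
  have hLshift : ∀ n : ℕ, L (n + 1)
      = (((n + 1).factorial : ℂ))⁻¹ • ∑ j ∈ Finset.range (n + 1), Sc (A ^ j) (A ^ (n - j)) := by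
    intro n
    simp only [hL, Nat.add_sub_cancel]
  have hLsummable : Summable L := by
    rw [← summable_nat_add_iff 1]
    refine (hsig.sigma' ?_).congr fun n => ?_
    · intro n; exact (hasSum_fintype _).summable
    · simp only [Finset.HasAntidiagonal.sigmaAntidiagonalEquivProd_apply]
      rw [hfib n, ← hLshift n]
  have hLsum : (∑' k : ℕ, L k) = ∑' pq : ℕ × ℕ, g pq := by
    rw [Summable.tsum_eq_zero_add hLsummable]
    have hL0 : L 0 = 0 := by simp [hL]
    rw [hL0, zero_add, hgsum_eq]
    exact tsum_congr fun n => hLshift n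
  calc (∑' k : ℕ, ((k.factorial : ℂ))⁻¹ • Ev2 z m (D i (P ^ k)))
      = ∑' k : ℕ, L k := tsum_congr fun k => by rw [hLHS k, hL]
    _ = ∑' pq : ℕ × ℕ, g pq := hLsum
    _ = ∫ α in (0:ℝ)..1,
          sandwich z m (NormedSpace.exp ((α : ℂ) • A))
            (NormedSpace.exp ((1 - (α : ℂ)) • A)) (D i P) := by rw [hg]; exact hRHS.symm

end
end

section
/- Let g : [0,2π] → (0,∞) be a continuous probability-type density with ∫₀^{2π} g = 2π, let G(s) = ∫₀^s g(u)du, and let x be a self-adjoint operator with distribution the uniform measure on [0,2π]. Then the unitaries u_t = e^{iG^{−1}(x)} and u = e^{ix} satisfy ‖u_t − u‖ ≤ 2π · sup_{s∈[0,2π]} |1 − g(s)|. -/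
open Real intervalIntegral

private lemma exp_I_lip (a b : ℝ) :
    ‖Complex.exp (Complex.I * a) - Complex.exp (Complex.I * b)‖ ≤ |a - b| := by
  have hderiv : ∀ t : ℝ, HasDerivAt (fun t : ℝ => Complex.exp (Complex.I * t))
      (Complex.exp (Complex.I * t) * (Complex.I * 1)) t := by
    intro t
    have h1 : HasDerivAt (fun t : ℝ => (t : ℂ)) 1 t := by
      simpa using (hasDerivAt_id t).ofReal_comp
    exact (h1.const_mul Complex.I).cexp
  have hlip : LipschitzWith 1 (fun t : ℝ => Complex.exp (Complex.I * t)) := by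
    apply lipschitzWith_of_nnnorm_deriv_le (fun t => (hderiv t).differentiableAt)
    intro t
    rw [(hderiv t).deriv]
    have : ‖Complex.exp (Complex.I * t) * (Complex.I * 1)‖ = 1 := by
      simp [Complex.norm_exp]
    rw [← NNReal.coe_le_coe, coe_nnnorm, this, NNReal.coe_one]
  simpa [Real.dist_eq, dist_eq_norm] using hlip.dist_le_mul a b


/-- For a positive density `g` on `[0,2π]` of total mass `2π`, with `G(s) = ∫₀ˢ g` and
`Ginv = G⁻¹`, and a self-adjoint operator `x` with spectrum `[0,2π]` (e.g. one whose
distribution is the uniform measure on `[0,2π]`), the unitaries `u_t = e^{iG⁻¹(x)}` and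
`u = e^{ix}` satisfy `‖u_t − u‖ ≤ 2π · sup_{s∈[0,2π]} |1 − g(s)|`. -/
theorem stmt_12 {𝒜 : Type*}
    [CStarAlgebra 𝒜]
    (g : ℝ → ℝ) (hg_cont : ContinuousOn g (Set.Icc 0 (2 * π)))
    (hg_pos : ∀ s ∈ Set.Icc (0:ℝ) (2 * π), 0 < g s)
    (hg_int : (∫ u in (0:ℝ)..(2 * π), g u) = 2 * π)
    (Ginv : ℝ → ℝ) (hGinv_cont : Continuous Ginv)
    (hGinv_left : ∀ s ∈ Set.Icc (0:ℝ) (2 * π), (∫ u in (0:ℝ)..(Ginv s), g u) = s)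
    (hGinv_right : ∀ s ∈ Set.Icc (0:ℝ) (2 * π), Ginv (∫ u in (0:ℝ)..s, g u) = s)
    (x : 𝒜) (hx : IsSelfAdjoint x)
    (hspec : spectrum ℝ x = Set.Icc 0 (2 * π)) :
    ‖cfc (p := IsStarNormal) (fun z : ℂ => Complex.exp (Complex.I * (Ginv z.re : ℂ))) x
        - cfc (p := IsStarNormal) (fun z : ℂ => Complex.exp (Complex.I * z)) x‖
      ≤ 2 * π * ⨆ s : Set.Icc (0:ℝ) (2 * π), |1 - g s| := by
  have hπ : (0:ℝ) < 2 * π := by positivity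
  set C := ⨆ s : Set.Icc (0:ℝ) (2 * π), |1 - g s| with hC
  have hC0 : 0 ≤ C := Real.iSup_nonneg fun s => abs_nonneg _
  have hbdd : BddAbove (Set.range fun s : Set.Icc (0:ℝ) (2 * π) => |1 - g s|) := by
    have h1 : ContinuousOn (fun s => |1 - g s|) (Set.Icc (0:ℝ) (2 * π)) :=
      (continuousOn_const.sub hg_cont).abs
    have := isCompact_Icc.bddAbove_image h1
    rwa [Set.image_eq_range] at this
  have hle : ∀ s ∈ Set.Icc (0:ℝ) (2 * π), |1 - g s| ≤ C := fun s hs =>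
    le_ciSup hbdd (⟨s, hs⟩ : Set.Icc (0:ℝ) (2 * π))
  -- Ginv 0 = 0 and Ginv (2π) = 2π
  have hGinv0 : Ginv 0 = 0 := by
    have := hGinv_right 0 ⟨le_refl _, le_of_lt hπ⟩
    simpa [intervalIntegral.integral_same] using this
  have hGinv2π : Ginv (2 * π) = 2 * π := by
    have := hGinv_right (2 * π) ⟨le_of_lt hπ, le_refl _⟩
    rwa [hg_int] at this
  -- Ginv maps [0, 2π] into itself
  have hinj : Set.InjOn Ginv (Set.Icc (0:ℝ) (2 * π)) := by
    intro a ha b hb hab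
    rw [← hGinv_left a ha, ← hGinv_left b hb, hab]
  have hmono : StrictMonoOn Ginv (Set.Icc (0:ℝ) (2 * π)) := by
    refine ContinuousOn.strictMonoOn_of_injOn_Icc (le_of_lt hπ) ?_ hGinv_cont.continuousOn hinj
    rw [hGinv0, hGinv2π]; exact le_of_lt hπ
  have hmem : ∀ s ∈ Set.Icc (0:ℝ) (2 * π), Ginv s ∈ Set.Icc (0:ℝ) (2 * π) := by
    intro s hs
    constructor
    · rw [← hGinv0]
      exact hmono.monotoneOn ⟨le_refl _, le_of_lt hπ⟩ hs hs.1
    · rw [← hGinv2π]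
      exact hmono.monotoneOn hs ⟨le_of_lt hπ, le_refl _⟩ hs.2
  -- key estimate |Ginv s - s| ≤ 2π * C
  have hkey : ∀ s ∈ Set.Icc (0:ℝ) (2 * π), |Ginv s - s| ≤ 2 * π * C := by
    intro s hs
    have ht := hmem s hs
    set t := Ginv s with htdef
    have hsub : Set.uIcc (0:ℝ) t ⊆ Set.Icc (0:ℝ) (2 * π) := by
      rw [Set.uIcc_of_le ht.1]
      exact Set.Icc_subset_Icc (le_refl _) ht.2
    have hgint : IntervalIntegrable g MeasureTheory.volume 0 t :=
      (hg_cont.mono hsub).intervalIntegrable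
    have h1int : IntervalIntegrable (fun _ : ℝ => (1:ℝ)) MeasureTheory.volume 0 t :=
      intervalIntegrable_const
    have heq : t - s = ∫ u in (0:ℝ)..t, (1 - g u) := by
      rw [intervalIntegral.integral_sub h1int hgint, hGinv_left s hs]
      simp
    have hbound : ‖∫ u in (0:ℝ)..t, (1 - g u)‖ ≤ C * |t - 0| := by
      apply intervalIntegral.norm_integral_le_of_norm_le_const
      intro u hu
      rw [Set.uIoc_of_le ht.1] at hu
      have hu' : u ∈ Set.Icc (0:ℝ) (2 * π) := ⟨le_of_lt hu.1, hu.2.trans ht.2⟩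
      simpa [Real.norm_eq_abs] using hle u hu'
    calc |t - s| = ‖∫ u in (0:ℝ)..t, (1 - g u)‖ := by rw [← heq, Real.norm_eq_abs]
      _ ≤ C * |t - 0| := hbound
      _ ≤ C * (2 * π) := by
          apply mul_le_mul_of_nonneg_left _ hC0
          rw [sub_zero, abs_of_nonneg ht.1]
          exact ht.2
      _ = 2 * π * C := by ring
  -- cfc part
  have hxn : IsStarNormal x := hx.isStarNormal
  have hf : Continuous fun z : ℂ => Complex.exp (Complex.I * (Ginv z.re : ℂ)) := by
    exact Complex.continuous_exp.comp (continuous_const.mul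
      (Complex.continuous_ofReal.comp (hGinv_cont.comp Complex.continuous_re)))
  have hh : Continuous fun z : ℂ => Complex.exp (Complex.I * z) := by
    exact Complex.continuous_exp.comp (continuous_const.mul continuous_id)
  rw [← cfc_sub (fun z : ℂ => Complex.exp (Complex.I * (Ginv z.re : ℂ)))
      (fun z : ℂ => Complex.exp (Complex.I * z)) x hf.continuousOn hh.continuousOn]
  apply norm_cfc_le (by positivity)
  intro z hz
  rw [← hx.spectrumRestricts.algebraMap_image] at hz
  obtain ⟨s, hs, rfl⟩ := hz
  rw [hspec] at hs
  have hre : (algebraMap ℝ ℂ s).re = s := by simp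
  rw [hre]
  calc ‖Complex.exp (Complex.I * (Ginv s : ℂ)) - Complex.exp (Complex.I * (algebraMap ℝ ℂ s))‖
      = ‖Complex.exp (Complex.I * (Ginv s : ℂ)) - Complex.exp (Complex.I * (s : ℂ))‖ := by
        norm_num
    _ ≤ |Ginv s - s| := exp_I_lip (Ginv s) s
    _ ≤ 2 * π * C := hkey s hs
end
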